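/- Suppose x = (x_{j,t}) is a feasible solution of the time-indexed covering program: for all 0 ≤ s < t ≤ T, Σ_{j : s ≤ r_j < t} p_j·x_{j,t} ≥ Σ_{j : s ≤ r_j < t} p_j − (t − s), with x_{j,t} ∈ {0,1} and x_{j,t-1} ≥ x_{j,t}. Define C_j as the maximal t with x_{j,t-1} = 1 (or C_j = r_j if no such t). Then for all s < t: Σ_{j : s ≤ r_j < C_j ≤ t} p_j ≤ t − s. -/
import Mathlib


/-- From a feasible solution of the time-indexed covering program, the completion
times `C j` (the maximal `t` with `x j (t-1) = 1`, or `r j` if none) satisfy the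
EDF feasibility condition `∑_{j : s ≤ r j < C j ≤ t} p j ≤ t - s` for all `s < t`. -/
theorem stmt4 {J : Type*} [Fintype J] [DecidableEq J]
    (p r : J → ℕ) (T : ℕ) (hrT : ∀ j, r j < T)
    (x : J → ℕ → ℕ)
    (hx01 : ∀ j t, x j t = 0 ∨ x j t = 1)
    (hmono : ∀ j t, x j (t + 1) ≤ x j t)
    (hcov : ∀ s t : ℕ, s < t → t ≤ T →
      (∑ j ∈ Finset.univ.filter (fun j => s ≤ r j ∧ r j < t), (p j : ℤ)) - ((t : ℤ) - (s : ℤ))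
        ≤ ∑ j ∈ Finset.univ.filter (fun j => s ≤ r j ∧ r j < t), (p j : ℤ) * (x j t : ℤ))
    (C : J → ℕ)
    (hC : ∀ j, r j ≤ C j ∧ C j ≤ T)
    (hC1 : ∀ j t, r j ≤ t → t < C j → x j t = 1)
    (hC0 : ∀ j t, C j ≤ t → x j t = 0) :
    ∀ s t : ℕ, s < t → t ≤ T →
      (∑ j ∈ Finset.univ.filter (fun j => s ≤ r j ∧ r j < C j ∧ C j ≤ t), (p j : ℤ))
        ≤ (t : ℤ) - (s : ℤ) := by
  intro s t hst htT
  have hcov' := hcov s t hst htT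
  set A := Finset.univ.filter (fun j => s ≤ r j ∧ r j < t) with hA
  have hsplit : ∑ j ∈ A, (p j : ℤ) * (x j t : ℤ)
      = ∑ j ∈ A.filter (fun j => t < C j), (p j : ℤ) := by
    conv_rhs => rw [Finset.sum_filter]
    apply Finset.sum_congr rfl
    intro j hj
    simp only [hA, Finset.mem_filter] at hj
    by_cases h : t < C j
    · rw [if_pos h, hC1 j t (le_of_lt hj.2.2) h]; ring
    · rw [if_neg h, hC0 j t (not_lt.mp h)]; ring
  have hsub : Finset.univ.filter (fun j => s ≤ r j ∧ r j < C j ∧ C j ≤ t)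
      ⊆ A.filter (fun j => ¬ t < C j) := by
    intro j hj
    simp only [hA, Finset.mem_filter, Finset.mem_univ, true_and, not_lt] at hj ⊢
    exact ⟨⟨hj.1, lt_of_lt_of_le hj.2.1 hj.2.2⟩, hj.2.2⟩
  have hsum := Finset.sum_filter_add_sum_filter_not A (fun j => t < C j)
    (fun j => (p j : ℤ))
  calc ∑ j ∈ Finset.univ.filter (fun j => s ≤ r j ∧ r j < C j ∧ C j ≤ t), (p j : ℤ)
      ≤ ∑ j ∈ A.filter (fun j => ¬ t < C j), (p j : ℤ) :=
        Finset.sum_le_sum_of_subset_of_nonneg hsub (fun j _ _ => by positivity)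
    _ ≤ (t : ℤ) - s := by linarith
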